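/- For every n ≥ 4, the graph K_{n−3} + ε_3 has spherical dimension n − 1. -/

import Mathlib

/-- A unit-distance embedding of a simple graph `G` in `ℝⁿ`: an injective map sending
adjacent vertices to points at distance 1, such that no other vertex lies on the
closed segment between the endpoints of an edge. -/
def IsUDEmbedding {V : Type*} (G : SimpleGraph V) {n : ℕ}
    (f : V → EuclideanSpace ℝ (Fin n)) : Prop :=
  Function.Injective f ∧
  (∀ ⦃u v⦄, G.Adj u v → dist (f u) (f v) = 1) ∧
  (∀ ⦃u v⦄, G.Adj u v → ∀ w, w ≠ u → w ≠ v → f w ∉ segment ℝ (f u) (f v))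

/-- `G` has a unit-distance embedding in `ℝⁿ`. -/
def HasUDEmbedding {V : Type*} (G : SimpleGraph V) (n : ℕ) : Prop :=
  ∃ f : V → EuclideanSpace ℝ (Fin n), IsUDEmbedding G f

/-- `G` has a unit-distance embedding in `ℝⁿ` whose image lies on a sphere of radius `r`. -/
def HasSphericalEmbeddingRadius {V : Type*} (G : SimpleGraph V) (n : ℕ) (r : ℝ) : Prop :=
  ∃ f : V → EuclideanSpace ℝ (Fin n), IsUDEmbedding G f ∧
    ∃ c : EuclideanSpace ℝ (Fin n), ∀ v, dist (f v) c = r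

/-- `G` has a unit-distance embedding in `ℝⁿ` whose image lies on a sphere
of radius `0 < r < 1`. -/
def HasSphericalEmbedding {V : Type*} (G : SimpleGraph V) (n : ℕ) : Prop :=
  ∃ r : ℝ, 0 < r ∧ r < 1 ∧ HasSphericalEmbeddingRadius G n r

/-- The dimension of a graph: the least `n` such that `G` has a unit-distance
embedding in `ℝⁿ`. -/
noncomputable def graphDim {V : Type*} (G : SimpleGraph V) : ℕ :=
  sInf {n | HasUDEmbedding G n}

/-- The spherical dimension of a graph: the least `n` such that `G` has a unit-distance
embedding in `ℝⁿ` on a sphere of radius strictly between 0 and 1.  By convention the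
spherical dimension of a graph with at most one vertex is `0`. -/
noncomputable def sphericalDim {V : Type*} [Fintype V] (G : SimpleGraph V) : ℕ :=
  if Fintype.card V ≤ 1 then 0 else sInf {n | HasSphericalEmbedding G n}

/-- The join `G + H` of two graphs: disjoint union together with all edges between them. -/
def graphJoin {V W : Type*} (G : SimpleGraph V) (H : SimpleGraph W) :
    SimpleGraph (V ⊕ W) :=
  SimpleGraph.fromRel (fun x y =>
    match x, y with
    | Sum.inl a, Sum.inl b => G.Adj a b
    | Sum.inr a, Sum.inr b => H.Adj a b
    | Sum.inl _, Sum.inr _ => True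
    | Sum.inr _, Sum.inl _ => False)

/-- `H` is a minor of `G` (branch-set formulation, equivalent to being obtainable from `G`
by vertex deletions, edge deletions and edge contractions). -/
def IsMinorOf {W V : Type*} (H : SimpleGraph W) (G : SimpleGraph V) : Prop :=
  ∃ φ : W → Set V,
    (∀ w, (SimpleGraph.induce (φ w) G).Connected) ∧
    (Pairwise fun w w' => Disjoint (φ w) (φ w')) ∧
    (∀ ⦃w w'⦄, H.Adj w w' → ∃ x ∈ φ w, ∃ y ∈ φ w', G.Adj x y)

/-- `H` is a proper minor of `G`: a minor that is not isomorphic to `G`. -/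
def IsProperMinorOf {W V : Type*} (H : SimpleGraph W) (G : SimpleGraph V) : Prop :=
  IsMinorOf H G ∧ ¬ Nonempty (H ≃g G)

/-- `G` is minor minimal with respect to dimension `n`. -/
def MinorMinimalDim {V : Type*} (G : SimpleGraph V) (n : ℕ) : Prop :=
  graphDim G = n ∧
  ∀ (W : Type) [Fintype W] (H : SimpleGraph W), Nonempty W →
    IsProperMinorOf H G → graphDim H < n

/-- `G` is minor minimal with respect to spherical dimension `n`. -/
def MinorMinimalSDim {V : Type*} [Fintype V] (G : SimpleGraph V) (n : ℕ) : Prop :=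
  sphericalDim G = n ∧
  ∀ (W : Type) [Fintype W] (H : SimpleGraph W), Nonempty W →
    IsProperMinorOf H G → sphericalDim H < n

/-- The vertex type of the graph `Sₙ`. -/
def SType : ℕ → Type
  | 0 => Fin 0
  | 1 => Fin 1
  | 2 => Fin 2
  | 3 => Fin 3
  | (n + 4) => Fin (n + 1) ⊕ Fin 3

instance : (n : ℕ) → Fintype (SType n)
  | 0 => inferInstanceAs (Fintype (Fin 0))
  | 1 => inferInstanceAs (Fintype (Fin 1))
  | 2 => inferInstanceAs (Fintype (Fin 2))
  | 3 => inferInstanceAs (Fintype (Fin 3))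
  | (n + 4) => inferInstanceAs (Fintype (Fin (n + 1) ⊕ Fin 3))

/-- The graph `Sₙ`:  `S₁ = ε₁`, `S₂ = ε₂`, `S₃ = ε₃`, and `Sₙ = K_{n-3} + ε₃` for `n ≥ 4`. -/
def SGraph : (n : ℕ) → SimpleGraph (SType n)
  | 0 => ⊥
  | 1 => ⊥
  | 2 => ⊥
  | 3 => ⊥
  | (n + 4) => graphJoin (⊤ : SimpleGraph (Fin (n + 1))) (⊥ : SimpleGraph (Fin 3))


open scoped RealInnerProductSpace

/-! ### Auxiliary lemmas for `stmt17` -/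

lemma aux_dist_lt_of_openSegment {N : ℕ} {c a b x : EuclideanSpace ℝ (Fin N)} {ρ : ℝ}
    (hρ : 0 < ρ) (ha : dist a c = ρ) (hb : dist b c = ρ) (hab : a ≠ b)
    (hx : x ∈ openSegment ℝ a b) : dist x c < ρ := by
  have hsc : StrictConvex ℝ (Metric.closedBall c ρ) := strictConvex_closedBall ℝ c ρ
  have h := hsc.openSegment_subset (Metric.mem_closedBall.mpr ha.le)
    (Metric.mem_closedBall.mpr hb.le) hab hx
  rwa [interior_closedBall c hρ.ne', Metric.mem_ball] at h

/-- The linear isometry `ℝᵏ → ℝᵏ⁺¹` appending a zero coordinate. -/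
noncomputable def auxSnocLI (k : ℕ) :
    EuclideanSpace ℝ (Fin k) →ₗᵢ[ℝ] EuclideanSpace ℝ (Fin (k + 1)) where
  toFun x := WithLp.toLp 2 (Fin.snoc x.ofLp 0)
  map_add' x y := by
    ext j
    refine Fin.lastCases ?_ (fun i => ?_) j
    · simp [Fin.snoc_last]
    · simp [Fin.snoc_castSucc]
  map_smul' a x := by
    ext j
    refine Fin.lastCases ?_ (fun i => ?_) j
    · simp [Fin.snoc_last]
    · simp [Fin.snoc_castSucc]
  norm_map' x := by
    rw [EuclideanSpace.norm_eq, EuclideanSpace.norm_eq, Fin.sum_univ_castSucc]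
    simp [Fin.snoc_castSucc, Fin.snoc_last]

lemma aux_hse_succ {V : Type*} {G : SimpleGraph V} {k : ℕ}
    (h : HasSphericalEmbedding G k) : HasSphericalEmbedding G (k + 1) := by
  obtain ⟨r, hr0, hr1, f, ⟨hinj, hdist, hseg⟩, c, hsph⟩ := h
  refine ⟨r, hr0, hr1, fun x => auxSnocLI k (f x),
    ⟨fun a b hab => hinj ((auxSnocLI k).injective hab), ?_, ?_⟩, auxSnocLI k c, ?_⟩
  · intro u v huv
    rw [(auxSnocLI k).dist_map]
    exact hdist huv
  · intro u v huv w hwu hwv hmem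
    obtain ⟨a, b, ha, hb, hab, heq⟩ := hmem
    refine hseg huv w hwu hwv ⟨a, b, ha, hb, hab, ?_⟩
    apply (auxSnocLI k).injective
    rw [map_add, map_smul, map_smul]
    exact heq
  · intro x
    rw [(auxSnocLI k).dist_map]
    exact hsph x

lemma aux_hse_mono {V : Type*} {G : SimpleGraph V} {k l : ℕ} (hkl : k ≤ l)
    (h : HasSphericalEmbedding G k) : HasSphericalEmbedding G l := by
  induction l, hkl using Nat.le_induction with
  | base => exact h
  | succ n hn ih => exact aux_hse_succ ih

lemma aux_adj_inl_inl {m : ℕ} {i j : Fin m} (hij : i ≠ j) :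
    (graphJoin (⊤ : SimpleGraph (Fin m)) (⊥ : SimpleGraph (Fin 3))).Adj
      (Sum.inl i) (Sum.inl j) := by
  simp [graphJoin, SimpleGraph.fromRel_adj, hij]

lemma aux_adj_inl_inr {m : ℕ} (i : Fin m) (j : Fin 3) :
    (graphJoin (⊤ : SimpleGraph (Fin m)) (⊥ : SimpleGraph (Fin 3))).Adj
      (Sum.inl i) (Sum.inr j) := by
  simp [graphJoin, SimpleGraph.fromRel_adj]

set_option maxHeartbeats 1000000 in
lemma aux_upper (m : ℕ) (hm : 1 ≤ m) :
    HasSphericalEmbedding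
      (graphJoin (⊤ : SimpleGraph (Fin m)) (⊥ : SimpleGraph (Fin 3))) (m + 2) := by
  classical
  have hmR : (0 : ℝ) < m := by exact_mod_cast hm
  set r : ℝ := Real.sqrt 2 / 2 with hr_def
  have hr_pos : 0 < r := by positivity
  have hr2 : r ^ 2 = 1 / 2 := by
    rw [hr_def, div_pow, Real.sq_sqrt (by norm_num : (0:ℝ) ≤ 2)]
    norm_num
  have hr_lt1 : r < 1 := by nlinarith [hr2, hr_pos]
  set t : ℝ := Real.sqrt 2 / m with ht_def
  have ht_pos : 0 < t := by positivity
  have hrt : r * t = 1 / m := by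
    rw [hr_def, ht_def, div_mul_div_comm, Real.mul_self_sqrt (by norm_num : (0:ℝ) ≤ 2)]
    rw [div_eq_div_iff (by positivity) hmR.ne']
    ring
  have ht2 : t ^ 2 = 2 / m ^ 2 := by
    rw [ht_def, div_pow, Real.sq_sqrt (by norm_num : (0:ℝ) ≤ 2)]
  set q : Fin 3 → Fin 2 → ℝ := ![![r, 0], ![-r, 0], ![0, r]] with hq_def
  set F : Fin m ⊕ Fin 3 → EuclideanSpace ℝ (Fin (m + 2)) :=
    Sum.elim (fun i => WithLp.toLp 2 (Fin.append (fun k => if k = i then r else 0) ![0, 0]))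
             (fun j => WithLp.toLp 2 (Fin.append (fun _ => t) (q j))) with hF_def
  set c : EuclideanSpace ℝ (Fin (m + 2)) := WithLp.toLp 2 (Fin.append (fun _ => t) ![0, 0]) with hc_def
  have hdist_of : ∀ (x y : EuclideanSpace ℝ (Fin (m + 2))) (a : ℝ), 0 ≤ a →
      (∑ i, (x i - y i) ^ 2) = a ^ 2 → dist x y = a := by
    intro x y a ha h
    rw [EuclideanSpace.dist_eq]
    have : ∀ i, dist (x i) (y i) ^ 2 = (x i - y i) ^ 2 := by
      intro i; rw [Real.dist_eq, sq_abs]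
    rw [Finset.sum_congr rfl fun i _ => this i, h, Real.sqrt_sq ha]
  -- the `Fin m`-block sums
  have hB : ∀ i : Fin m, (∑ k : Fin m, ((if k = i then r else 0) - t) ^ 2) = 1 / 2 := by
    intro i
    have hpt : ∀ k : Fin m, ((if k = i then r else 0) - t) ^ 2
        = t ^ 2 + (if k = i then r ^ 2 - 2 * (r * t) else 0) := by
      intro k
      by_cases h : k = i
      · rw [if_pos h, if_pos h]; ring
      · rw [if_neg h, if_neg h]; ring
    rw [Finset.sum_congr rfl fun k _ => hpt k, Finset.sum_add_distrib,
      Finset.sum_const, Finset.sum_ite_eq' Finset.univ i, if_pos (Finset.mem_univ i),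
      Finset.card_univ, Fintype.card_fin, nsmul_eq_mul]
    rw [hr2, hrt, ht2]
    field_simp
    ring
  have hA : ∀ i j : Fin m, i ≠ j →
      (∑ k : Fin m, ((if k = i then r else 0) - (if k = j then r else 0)) ^ 2) = 1 := by
    intro i j hij
    have hpt : ∀ k : Fin m, ((if k = i then r else 0) - (if k = j then r else 0)) ^ 2
        = (if k = i then r ^ 2 else 0) + (if k = j then r ^ 2 else 0) := by
      intro k
      by_cases h1 : k = i
      · have h2 : ¬ (k = j) := fun h2 => hij (h1.symm.trans h2)
        rw [if_pos h1, if_neg h2, if_pos h1, if_neg h2]; ring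
      · by_cases h2 : k = j
        · rw [if_neg h1, if_pos h2, if_neg h1, if_pos h2]; ring
        · rw [if_neg h1, if_neg h2, if_neg h1, if_neg h2]; ring
    rw [Finset.sum_congr rfl fun k _ => hpt k, Finset.sum_add_distrib,
      Finset.sum_ite_eq' Finset.univ i, Finset.sum_ite_eq' Finset.univ j,
      if_pos (Finset.mem_univ i), if_pos (Finset.mem_univ j), hr2]
    norm_num
  -- all points are on the sphere of radius `r` around `c`
  have hsphere : ∀ x, dist (F x) c = r := by
    intro x
    apply hdist_of _ _ r hr_pos.le
    rcases x with i | j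
    · rw [Fin.sum_univ_add]
      have h1 : (∑ k : Fin m,
          (F (Sum.inl i) (Fin.castAdd 2 k) - c (Fin.castAdd 2 k)) ^ 2) = 1 / 2 := by
        rw [← hB i]
        refine Finset.sum_congr rfl fun k _ => ?_
        simp [hF_def, hc_def, Fin.append_left]
      have h2 : (∑ l : Fin 2,
          (F (Sum.inl i) (Fin.natAdd m l) - c (Fin.natAdd m l)) ^ 2) = 0 := by
        apply Finset.sum_eq_zero
        intro l _
        simp [hF_def, hc_def, Fin.append_right]
      rw [h1, h2, hr2]
      norm_num
    · rw [Fin.sum_univ_add]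
      have h1 : (∑ k : Fin m,
          (F (Sum.inr j) (Fin.castAdd 2 k) - c (Fin.castAdd 2 k)) ^ 2) = 0 := by
        apply Finset.sum_eq_zero
        intro k _
        simp [hF_def, hc_def, Fin.append_left]
      have h2 : (∑ l : Fin 2,
          (F (Sum.inr j) (Fin.natAdd m l) - c (Fin.natAdd m l)) ^ 2) = 1 / 2 := by
        rw [Fin.sum_univ_two]
        fin_cases j <;>
          simp [hF_def, hc_def, hq_def, Fin.append_right] <;>
          nlinarith [hr2]
      rw [h1, h2, hr2]
      norm_num
  -- unit distances
  have hd1 : ∀ i i' : Fin m, i ≠ i' → dist (F (Sum.inl i)) (F (Sum.inl i')) = 1 := by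
    intro i i' h
    apply hdist_of _ _ 1 zero_le_one
    rw [Fin.sum_univ_add]
    have h1 : (∑ k : Fin m,
        (F (Sum.inl i) (Fin.castAdd 2 k) - F (Sum.inl i') (Fin.castAdd 2 k)) ^ 2) = 1 := by
      rw [← hA i i' h]
      refine Finset.sum_congr rfl fun k _ => ?_
      simp [hF_def, Fin.append_left]
    have h2 : (∑ l : Fin 2,
        (F (Sum.inl i) (Fin.natAdd m l) - F (Sum.inl i') (Fin.natAdd m l)) ^ 2) = 0 := by
      apply Finset.sum_eq_zero
      intro l _
      simp [hF_def, Fin.append_right]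
    rw [h1, h2]
    norm_num
  have hd2 : ∀ (i : Fin m) (j : Fin 3), dist (F (Sum.inl i)) (F (Sum.inr j)) = 1 := by
    intro i j
    apply hdist_of _ _ 1 zero_le_one
    rw [Fin.sum_univ_add]
    have h1 : (∑ k : Fin m,
        (F (Sum.inl i) (Fin.castAdd 2 k) - F (Sum.inr j) (Fin.castAdd 2 k)) ^ 2) = 1 / 2 := by
      rw [← hB i]
      refine Finset.sum_congr rfl fun k _ => ?_
      simp [hF_def, Fin.append_left]
    have h2 : (∑ l : Fin 2,
        (F (Sum.inl i) (Fin.natAdd m l) - F (Sum.inr j) (Fin.natAdd m l)) ^ 2) = 1 / 2 := by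
      rw [Fin.sum_univ_two]
      fin_cases j <;>
        simp [hF_def, hq_def, Fin.append_right] <;>
        nlinarith [hr2]
    rw [h1, h2]
    norm_num
  -- injectivity
  have hinj : Function.Injective F := by
    intro a b hab
    replace hab := congrArg WithLp.ofLp hab
    rcases a with i | j <;> rcases b with i' | j'
    · by_cases h : i = i'
      · rw [h]
      · exfalso
        have hco := congrFun hab (Fin.castAdd 2 i)
        simp [hF_def, Fin.append_left, h] at hco
        exact hr_pos.ne' hco
    · exfalso
      fin_cases j'
      · have hco := congrFun hab (Fin.natAdd m 0)
        simp [hF_def, hq_def, Fin.append_right] at hco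
        exact hr_pos.ne' hco.symm
      · have hco := congrFun hab (Fin.natAdd m 0)
        simp [hF_def, hq_def, Fin.append_right] at hco
        linarith [hco]
      · have hco := congrFun hab (Fin.natAdd m 1)
        simp [hF_def, hq_def, Fin.append_right] at hco
        exact hr_pos.ne' hco.symm
    · exfalso
      fin_cases j
      · have hco := congrFun hab (Fin.natAdd m 0)
        simp [hF_def, hq_def, Fin.append_right] at hco
        exact hr_pos.ne' hco
      · have hco := congrFun hab (Fin.natAdd m 0)
        simp [hF_def, hq_def, Fin.append_right] at hco
        linarith [hco]
      · have hco := congrFun hab (Fin.natAdd m 1)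
        simp [hF_def, hq_def, Fin.append_right] at hco
        exact hr_pos.ne' hco
    · have h0 := congrFun hab (Fin.natAdd m 0)
      have h1 := congrFun hab (Fin.natAdd m 1)
      simp only [hF_def, Sum.elim_inr, WithLp.ofLp_toLp, Fin.append_right] at h0 h1
      fin_cases j <;> fin_cases j' <;> first
        | rfl
        | (exfalso; simp [hq_def] at h0 h1 <;> linarith [hr_pos])
  -- assemble
  refine ⟨r, hr_pos, hr_lt1, F, ⟨hinj, ?_, ?_⟩, c, hsphere⟩
  · intro u v huv
    rcases u with i | j <;> rcases v with i' | j'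
    · have h : i ≠ i' := by
        simp [graphJoin, SimpleGraph.fromRel_adj] at huv
        rcases huv.2 with h | h
        · exact h
        · exact fun he => h he.symm
      exact hd1 i i' h
    · exact hd2 i j'
    · rw [dist_comm]; exact hd2 i' j
    · exfalso
      simp [graphJoin, SimpleGraph.fromRel_adj] at huv
  · intro u v huv w hwu hwv hmem
    have h1 : F u ≠ F w := fun h => hwu (hinj h).symm
    have h2 : F v ≠ F w := fun h => hwv (hinj h).symm
    have hne : F u ≠ F v := fun h => huv.ne (hinj h)
    have hlt := aux_dist_lt_of_openSegment hr_pos (hsphere u) (hsphere v) hne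
      (mem_openSegment_of_ne_left_right h1 h2 hmem)
    exact absurd (hsphere w) (ne_of_lt hlt)

set_option maxHeartbeats 1000000 in
lemma aux_lower (m : ℕ) (hm : 1 ≤ m) :
    ¬ HasSphericalEmbedding
      (graphJoin (⊤ : SimpleGraph (Fin m)) (⊥ : SimpleGraph (Fin 3))) (m + 1) := by
  rintro ⟨ρ, hρ0, hρ1, f, ⟨hinj, hdist, hseg⟩, c, hsph⟩
  set v : Fin m → EuclideanSpace ℝ (Fin (m + 1)) := fun i => f (Sum.inl i) - c with hv_def
  set p : Fin 3 → EuclideanSpace ℝ (Fin (m + 1)) := fun j => f (Sum.inr j) - c with hp_def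
  have key : ∀ a b : Fin m ⊕ Fin 3, dist (f a) (f b) = 1 →
      ⟪f a - c, f b - c⟫ = ρ ^ 2 - 1 / 2 := by
    intro a b hab
    have h1 : ‖f a - c‖ = ρ := by rw [← dist_eq_norm]; exact hsph a
    have h2 : ‖f b - c‖ = ρ := by rw [← dist_eq_norm]; exact hsph b
    have h3 : ‖(f a - c) - (f b - c)‖ = 1 := by
      rw [sub_sub_sub_cancel_right, ← dist_eq_norm]; exact hab
    have h4 := norm_sub_sq_real (f a - c) (f b - c)
    rw [h1, h2, h3] at h4
    nlinarith [h4]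
  have hvp : ∀ (i : Fin m) (k : Fin 3), ⟪v i, p k⟫ = ρ ^ 2 - 1 / 2 :=
    fun i k => key _ _ (hdist (aux_adj_inl_inr i k))
  have hvv : ∀ i j : Fin m, i ≠ j → ⟪v i, v j⟫ = ρ ^ 2 - 1 / 2 :=
    fun i j h => key _ _ (hdist (aux_adj_inl_inl h))
  have hvvd : ∀ i : Fin m, ⟪v i, v i⟫ = ρ ^ 2 := by
    intro i
    rw [real_inner_self_eq_norm_sq]
    have h : ‖v i‖ = ρ := by rw [hv_def, ← dist_eq_norm]; exact hsph _
    rw [h]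
  have hFne : ∀ k l : Fin 3, k ≠ l → f (Sum.inr k) ≠ f (Sum.inr l) := by
    intro k l hkl h
    exact hkl (Sum.inr.inj (hinj h))
  by_cases hLI : LinearIndependent ℝ v
  · -- the simplex is linearly independent: the three `ε₃`-points are collinear
    have hrank : Module.finrank ℝ ↥((Submodule.span ℝ (Set.range v))ᗮ) = 1 := by
      have h1 := Submodule.finrank_add_finrank_orthogonal (Submodule.span ℝ (Set.range v))
      rw [finrank_span_eq_card hLI, Fintype.card_fin, finrank_euclideanSpace_fin] at h1
      omega
    have hd_mem : ∀ k l : Fin 3, p k - p l ∈ (Submodule.span ℝ (Set.range v))ᗮ := by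
      intro k l
      rw [Submodule.mem_orthogonal]
      intro u hu
      induction hu using Submodule.span_induction with
      | mem x hx =>
        obtain ⟨i, rfl⟩ := hx
        rw [inner_sub_right, hvp i k, hvp i l, sub_self]
      | zero => rw [inner_zero_left]
      | add x y hx hy ihx ihy => rw [inner_add_left, ihx, ihy, add_zero]
      | smul a x hx ih => rw [real_inner_smul_left, ih, mul_zero]
    have hp10 : p 1 - p 0 ≠ 0 := by
      intro h
      have h' : p 1 = p 0 := sub_eq_zero.mp h
      rw [hp_def] at h'
      exact hFne 1 0 (by decide) (sub_left_injective h')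
    obtain ⟨lam, hlam⟩ := (finrank_eq_one_iff_of_nonzero'
        (⟨p 1 - p 0, hd_mem 1 0⟩ : ↥((Submodule.span ℝ (Set.range v))ᗮ))
        (fun h0 => hp10 (by simpa using congrArg Subtype.val h0))).mp hrank
        ⟨p 2 - p 0, hd_mem 2 0⟩
    have hlamE : f (Sum.inr 2) - f (Sum.inr 0) = lam • (f (Sum.inr 1) - f (Sum.inr 0)) := by
      have h := congrArg Subtype.val hlam
      simp only [Submodule.coe_smul] at h
      simp only [hp_def] at h
      rw [sub_sub_sub_cancel_right, sub_sub_sub_cancel_right] at h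
      exact h.symm
    have hlam0 : lam ≠ 0 := by
      intro h0
      rw [h0, zero_smul] at hlamE
      exact hFne 2 0 (by decide) (sub_eq_zero.mp hlamE)
    have hlam1 : lam ≠ 1 := by
      intro h1
      rw [h1, one_smul] at hlamE
      exact hFne 2 1 (by decide) (sub_left_injective hlamE)
    have hP2 : f (Sum.inr 2) = f (Sum.inr 0) + lam • (f (Sum.inr 1) - f (Sum.inr 0)) := by
      rw [← hlamE]; abel
    have habs : ∀ x y z : Fin 3, x ≠ y →
        f (Sum.inr z) ∈ openSegment ℝ (f (Sum.inr x)) (f (Sum.inr y)) → False := by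
      intro x y z hxy hmem
      have hlt := aux_dist_lt_of_openSegment hρ0 (hsph (Sum.inr x)) (hsph (Sum.inr y))
        (hFne x y hxy) hmem
      exact absurd (hsph (Sum.inr z)) (ne_of_lt hlt)
    rcases lt_trichotomy lam 0 with hneg | h0 | hpos
    · have h1lam : (0:ℝ) < 1 - lam := by linarith
      refine habs 1 2 0 (by decide) ?_
      refine ⟨-lam / (1 - lam), 1 / (1 - lam), div_pos (by linarith) h1lam,
        div_pos one_pos h1lam, ?_, ?_⟩
      · field_simp
        ring
      · rw [hP2]
        match_scalars <;> (field_simp; try ring)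
    · exact hlam0 h0
    · rcases lt_trichotomy lam 1 with hlt1 | h1 | hgt1
      · refine habs 0 1 2 (by decide) ?_
        refine ⟨1 - lam, lam, by linarith, hpos, by ring, ?_⟩
        rw [hP2]
        match_scalars <;> ring
      · exact hlam1 h1
      · refine habs 0 2 1 (by decide) ?_
        refine ⟨(lam - 1) / lam, 1 / lam, div_pos (by linarith) hpos,
          div_pos one_pos hpos, ?_, ?_⟩
        · field_simp; ring
        · rw [hP2]
          match_scalars <;> (field_simp; try ring)
  · -- the simplex is linearly dependent: impossible
    obtain ⟨g, hg, i0, hgi0⟩ := Fintype.not_linearIndependent_iff.mp hLI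
    have hgp : (∑ i, g i) * (ρ ^ 2 - 1 / 2) = 0 := by
      have h0 : ⟪∑ i, g i • v i, p 0⟫ = 0 := by rw [hg, inner_zero_left]
      rw [sum_inner] at h0
      calc (∑ i, g i) * (ρ ^ 2 - 1 / 2) = ∑ i, g i * (ρ ^ 2 - 1 / 2) := by
            rw [Finset.sum_mul]
        _ = ∑ i, ⟪g i • v i, p 0⟫ := by
            refine Finset.sum_congr rfl fun i _ => ?_
            rw [real_inner_smul_left, hvp i 0]
        _ = 0 := h0
    have hgj : ∀ j, g j = 0 := by
      intro j
      have h0 : ⟪∑ i, g i • v i, v j⟫ = 0 := by rw [hg, inner_zero_left]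
      rw [sum_inner] at h0
      have hsplit : ∀ i : Fin m,
          ⟪g i • v i, v j⟫ = g i * (ρ ^ 2 - 1 / 2) + (if i = j then g i * (1 / 2) else 0) := by
        intro i
        rw [real_inner_smul_left]
        by_cases h : i = j
        · subst h
          rw [hvvd, if_pos rfl]; ring
        · rw [hvv i j h, if_neg h]; ring
      rw [Finset.sum_congr rfl fun i _ => hsplit i, Finset.sum_add_distrib,
        ← Finset.sum_mul, Finset.sum_ite_eq' Finset.univ j (fun i => g i * (1 / 2)),
        if_pos (Finset.mem_univ j), hgp] at h0
      linarith
    exact hgi0 (hgj i0)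

lemma aux_sdim (m : ℕ) (hm : 1 ≤ m) :
    sphericalDim (graphJoin (⊤ : SimpleGraph (Fin m)) (⊥ : SimpleGraph (Fin 3))) = m + 2 := by
  rw [sphericalDim, if_neg (by simp [Fintype.card_sum])]
  refine le_antisymm (Nat.sInf_le (aux_upper m hm)) (le_csInf ⟨m + 2, aux_upper m hm⟩ ?_)
  intro k hk
  by_contra hlt
  push_neg at hlt
  exact aux_lower m hm (aux_hse_mono (by omega) hk)


/-- For every `n ≥ 4`, the graph `K_{n-3} + ε₃` has spherical dimension
`n - 1`. -/
theorem stmt17 (n : ℕ) (hn : 4 ≤ n) :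
    sphericalDim
      (graphJoin (⊤ : SimpleGraph (Fin (n - 3))) (⊥ : SimpleGraph (Fin 3))) = n - 1 := by
  have h := aux_sdim (n - 3) (by omega)
  rw [h]
  omega
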